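/- Let 0 ≤ u < v ≤ 1, let k := ⌊1/(v−u)⌋, and let π_k : Δ → ℝ^k be the projection π_k(x) := (x₁,…,x_k). Then the polytopes P_{u,v}(ℰ), as ℰ ranges over all families of subsets of {1,…,k}, are pairwise disjoint, and Δ* ∖ D(u,v) = Δ* ∩ π_k^{−1}( ⋃_ℰ P_{u,v}(ℰ) ), where the union runs over all families ℰ of subsets of {1,…,k}. -/

import Mathlib

noncomputable section

/-- The space `ℓ¹(ℝ)` of real sequences with summable absolute values. -/
abbrev ellone : Type := lp (fun _ : ℕ => ℝ) 1

/-- The set `Δ` of nonincreasing nonnegative sequences of `ℓ¹`-norm at most `1`.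
(Sequences are indexed from `0` in Lean, so `x i` is the paper's `x_{i+1}`.) -/
def deltaSet : Set ellone := {x | (∀ i : ℕ, x (i + 1) ≤ x i) ∧ (∀ i : ℕ, 0 ≤ x i) ∧ ‖x‖ ≤ 1}

/-- The set `Δ*` of elements of `Δ` with `ℓ¹`-norm exactly `1`. -/
def deltaStar : Set ellone := {x ∈ deltaSet | ‖x‖ = 1}

/-- `φ_E(x) = ∑_{i ∈ E} x_i`. -/
def phi (E : Set ℕ) (x : ellone) : ℝ := ∑' i : E, x i

/-- `D(u, v)`: elements of `Δ` having a subsum in the open interval `(u, v)`. -/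
def Dset (u v : ℝ) : Set ellone := {x ∈ deltaSet | ∃ E : Set ℕ, phi E x ∈ Set.Ioo u v}

/-- The simplex `Δᵏ` of nonincreasing nonnegative vectors with coordinate sum at most `1`. -/
def simplexSet (k : ℕ) : Set (Fin k → ℝ) :=
  {x | (∀ i j : Fin k, i ≤ j → x j ≤ x i) ∧ (∀ i, 0 ≤ x i) ∧ ∑ i, x i ≤ 1}

/-- The polytope `P_{u,v}(ℰ)`. -/
def Puv (u v : ℝ) {k : ℕ} (ℰ : Finset (Finset (Fin k))) : Set (Fin k → ℝ) :=
  {x | x ∈ simplexSet k ∧ ∀ E : Finset (Fin k),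
    (E ∈ ℰ → v ≤ ∑ i ∈ E, x i) ∧ (E ∉ ℰ → 1 - u ≤ ∑ i ∈ Eᶜ, x i)}

/-- The projection `π_k` onto the first `k` coordinates. -/
def projk (k : ℕ) (x : ellone) : Fin k → ℝ := fun i => x i

/-! ### Auxiliary lemmas -/

lemma aux_summable (x : ellone) : Summable fun i => x i := by
  have h := lp.memℓp x
  rw [memℓp_gen_iff (by norm_num)] at h
  apply Summable.of_norm
  simpa using h

lemma aux_norm (x : ellone) (h0 : ∀ i, 0 ≤ x i) : ‖x‖ = ∑' i, x i := by
  rw [lp.norm_eq_tsum_rpow (by norm_num) x]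
  have h : ∀ i : ℕ, ‖x i‖ = x i := fun i => by
    rw [Real.norm_eq_abs, abs_of_nonneg (h0 i)]
  simp [h]

lemma aux_anti (x : ellone) (hm : ∀ i : ℕ, x (i + 1) ≤ x i) :
    ∀ i j : ℕ, i ≤ j → x j ≤ x i := by
  intro i j hij
  induction j, hij using Nat.le_induction with
  | base => exact le_refl _
  | succ n hn ih => exact (hm n).trans ih

lemma aux_bound (x : ellone) (hm : ∀ i : ℕ, x (i + 1) ≤ x i) (h0 : ∀ i, 0 ≤ x i)
    (hnorm : ‖x‖ ≤ 1) (k i : ℕ) (hki : k ≤ i) : x i ≤ 1 / (k + 1) := by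
  have hxk : x i ≤ x k := aux_anti x hm k i hki
  have hsum : Summable fun i => x i := aux_summable x
  have h1 : ((k : ℝ) + 1) * x k ≤ ∑ j ∈ Finset.range (k + 1), x j := by
    have := Finset.card_nsmul_le_sum (Finset.range (k + 1)) (fun j => x j) (x k)
      (fun j hj => aux_anti x hm j k (Nat.lt_succ_iff.mp (Finset.mem_range.mp hj)))
    simpa [nsmul_eq_mul, add_comm] using this
  have h2 : ∑ j ∈ Finset.range (k + 1), x j ≤ 1 := by
    calc ∑ j ∈ Finset.range (k + 1), x j ≤ ∑' j, x j :=
          Summable.sum_le_tsum _ (fun _ _ => h0 _) hsum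
      _ = ‖x‖ := (aux_norm x h0).symm
      _ ≤ 1 := hnorm
  have hk0 : (0 : ℝ) < (k : ℝ) + 1 := by positivity
  rw [le_div_iff₀ hk0]
  nlinarith [mul_le_mul_of_nonneg_right hxk hk0.le]

lemma phi_finset (x : ellone) (F : Finset ℕ) : phi ↑F x = ∑ i ∈ F, x i :=
  Finset.tsum_subtype' F (fun i => x i)

lemma phi_mono (x : ellone) (h0 : ∀ i, 0 ≤ x i) {A B : Set ℕ} (h : A ⊆ B) :
    phi A x ≤ phi B x := by
  have hsum : Summable fun i => x i := aux_summable x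
  rw [phi, phi, tsum_subtype, tsum_subtype]
  exact Summable.tsum_le_tsum (fun i => Set.indicator_le_indicator_of_subset h (fun a => h0 a) i)
    (hsum.indicator A) (hsum.indicator B)

lemma phi_union (x : ellone) {A B : Set ℕ} (h : Disjoint A B) :
    phi (A ∪ B) x = phi A x + phi B x :=
  Summable.tsum_union_disjoint h ((aux_summable x).subtype A) ((aux_summable x).subtype B)

lemma phi_Ici (x : ellone) (k : ℕ) : phi (Set.Ici k) x = ∑' i, x (i + k) := by
  rw [phi, ← Equiv.tsum_eq
    (⟨fun n => ⟨n + k, by simp⟩, fun m => m.1 - k, fun n => by simp,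
      fun m => Subtype.ext (Nat.sub_add_cancel (Set.mem_Ici.mp m.2))⟩ :
      ℕ ≃ (Set.Ici k : Set ℕ)) (fun m : (Set.Ici k : Set ℕ) => x ↑m)]
  rfl

lemma greedy {u v : ℝ} (huv : u < v) (x : ellone) (h0 : ∀ i, 0 ≤ x i) (k : ℕ)
    (hsmall : ∀ i, k ≤ i → x i < v - u)
    (hno : ∀ E : Set ℕ, phi E x ∉ Set.Ioo u v)
    (F : Finset ℕ) (hF : ∀ i ∈ F, i < k) (hs : ∑ i ∈ F, x i ≤ u) :
    ∑ i ∈ F, x i + ∑' i, x (i + k) ≤ u := by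
  have hsum : Summable fun i => x i := aux_summable x
  have htail : Summable fun i => x (i + k) := (summable_nat_add_iff k).2 hsum
  have heq : ∀ m : ℕ, ∑ i ∈ F, x i + ∑ i ∈ Finset.range m, x (i + k)
      = phi ↑(F ∪ Finset.Ico k (k + m)) x := by
    intro m
    have hd : Disjoint F (Finset.Ico k (k + m)) := by
      rw [Finset.disjoint_left]
      intro a ha ha'
      exact absurd (Finset.mem_Ico.1 ha').1 (not_le.2 (hF a ha))
    rw [phi_finset, Finset.sum_union hd]
    congr 1
    rw [Finset.sum_Ico_eq_sum_range]
    simp only [Nat.add_sub_cancel_left]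
    exact (Finset.sum_congr rfl fun i _ => by rw [add_comm]).symm
  have key : ∀ n, ∑ i ∈ F, x i + ∑ i ∈ Finset.range n, x (i + k) ≤ u := by
    intro n
    induction n with
    | zero => simpa using hs
    | succ n ih =>
      have hlt : ∑ i ∈ F, x i + ∑ i ∈ Finset.range (n + 1), x (i + k) < v := by
        rw [Finset.sum_range_succ]
        have := hsmall (n + k) (Nat.le_add_left _ _)
        linarith
      have hn := hno ↑(F ∪ Finset.Ico k (k + (n + 1)))
      rw [← heq] at hn
      simp only [Set.mem_Ioo, not_and, not_lt] at hn
      by_contra hcon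
      push_neg at hcon
      exact absurd (hn hcon) (not_le.2 hlt)
  have hlim : Filter.Tendsto (fun n => ∑ i ∈ F, x i + ∑ i ∈ Finset.range n, x (i + k))
      Filter.atTop (nhds (∑ i ∈ F, x i + ∑' i, x (i + k))) :=
    Filter.Tendsto.const_add _ htail.hasSum.tendsto_sum_nat
  exact le_of_tendsto' hlim key

theorem stmt_5 (u v : ℝ) (hu : 0 ≤ u) (huv : u < v) (hv : v ≤ 1)
    (k : ℕ) (hk : k = ⌊1 / (v - u)⌋₊) :
    (∀ ℰ₁ ℰ₂ : Finset (Finset (Fin k)), ℰ₁ ≠ ℰ₂ → Disjoint (Puv u v ℰ₁) (Puv u v ℰ₂)) ∧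
      deltaStar \ Dset u v =
        deltaStar ∩ projk k ⁻¹' (⋃ ℰ : Finset (Finset (Fin k)), Puv u v ℰ) := by
  classical
  have hvu : (0 : ℝ) < v - u := sub_pos.2 huv
  constructor
  · -- disjointness
    intro ℰ₁ ℰ₂ hne
    rw [Set.disjoint_left]
    intro y h1 h2
    apply hne
    have key : ∀ ℰ ℰ' : Finset (Finset (Fin k)), y ∈ Puv u v ℰ → y ∈ Puv u v ℰ' →
        ∀ E : Finset (Fin k), E ∈ ℰ → E ∈ ℰ' := by
      intro ℰ ℰ' hy hy' E hE
      by_contra hE'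
      have hv' := (hy.2 E).1 hE
      have hu' := (hy'.2 E).2 hE'
      have hsc := Finset.sum_add_sum_compl E (fun i => y i)
      have hle := hy.1.2.2
      linarith
    exact Finset.ext fun E => ⟨key ℰ₁ ℰ₂ h1 h2 E, key ℰ₂ ℰ₁ h2 h1 E⟩
  · -- set equality
    ext x
    constructor
    · rintro ⟨hxs, hxD⟩
      obtain ⟨⟨hmono, h0, hnle⟩, hnorm1⟩ := hxs
      have hsum : Summable fun i => x i := aux_summable x
      have htsum1 : ∑' i, x i = 1 := by rw [← aux_norm x h0, hnorm1]
      have hno : ∀ E : Set ℕ, phi E x ∉ Set.Ioo u v := by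
        intro E hE
        exact hxD ⟨⟨hmono, h0, hnle⟩, E, hE⟩
      have hsmall : ∀ i, k ≤ i → x i < v - u := by
        intro i hi
        have hb := aux_bound x hmono h0 hnle k i hi
        have hfl : (1 : ℝ) / (v - u) < (k : ℝ) + 1 := by
          rw [hk]
          exact_mod_cast Nat.lt_floor_add_one (1 / (v - u))
        have hk0 : (0 : ℝ) < (k : ℝ) + 1 := by positivity
        rw [div_lt_iff₀ hvu] at hfl
        have : 1 / ((k : ℝ) + 1) < v - u := by
          rw [div_lt_iff₀ hk0]
          nlinarith
        linarith
      have huniv : ∑ i : Fin k, x ↑i = ∑ i ∈ Finset.range k, x i :=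
        Fin.sum_univ_eq_sum_range (fun i => x i) k
      have htot : ∑ i ∈ Finset.range k, x i + ∑' i, x (i + k) = 1 := by
        rw [Summable.sum_add_tsum_nat_add k hsum, htsum1]
      refine ⟨⟨⟨hmono, h0, hnle⟩, hnorm1⟩, ?_⟩
      rw [Set.mem_preimage, Set.mem_iUnion]
      refine ⟨Finset.univ.filter (fun E => v ≤ ∑ i ∈ E, x ↑i), ⟨?_, ?_, ?_⟩, ?_⟩
      · exact fun i j hij => aux_anti x hmono i j hij
      · exact fun i => h0 i
      · show ∑ i : Fin k, x ↑i ≤ 1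
        rw [huniv]
        calc ∑ i ∈ Finset.range k, x i ≤ ∑' i, x i := Summable.sum_le_tsum _ (fun _ _ => h0 _) hsum
          _ = 1 := htsum1
      · intro E
        constructor
        · intro hE
          exact (Finset.mem_filter.1 hE).2
        · intro hE
          have hlt : ∑ i ∈ E, x ↑i < v := by
            by_contra hge
            exact hE (Finset.mem_filter.2 ⟨Finset.mem_univ _, not_lt.1 hge⟩)
          set F' : Finset ℕ := E.image Fin.val with hF'def
          have hF' : ∀ i ∈ F', i < k := by
            intro i hi
            obtain ⟨j, _, rfl⟩ := Finset.mem_image.1 hi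
            exact j.isLt
          have hsF' : ∑ i ∈ F', x i = ∑ i ∈ E, x ↑i :=
            Finset.sum_image (fun a _ b _ h => Fin.val_injective h)
          have hsle : ∑ i ∈ F', x i ≤ u := by
            have hnF := hno ↑F'
            rw [phi_finset] at hnF
            simp only [Set.mem_Ioo, not_and, not_lt] at hnF
            by_contra hcon
            push_neg at hcon
            rw [hsF'] at hnF hcon
            exact absurd (hnF hcon) (not_le.2 hlt)
          have hg := greedy huv x h0 k hsmall hno F' hF' hsle
          rw [hsF'] at hg
          have hsc := Finset.sum_add_sum_compl E (fun i : Fin k => x ↑i)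
          rw [huniv] at hsc
          have : ∑ i ∈ Eᶜ, projk k x i = ∑ i ∈ Eᶜ, x ↑i := rfl
          rw [this]
          linarith
    · rintro ⟨hxs, hxU⟩
      obtain ⟨⟨hmono, h0, hnle⟩, hnorm1⟩ := hxs
      have hsum : Summable fun i => x i := aux_summable x
      have htsum1 : ∑' i, x i = 1 := by rw [← aux_norm x h0, hnorm1]
      rw [Set.mem_preimage, Set.mem_iUnion] at hxU
      obtain ⟨ℰ, hsimp, hcond⟩ := hxU
      refine ⟨⟨⟨hmono, h0, hnle⟩, hnorm1⟩, ?_⟩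
      rintro ⟨-, E, hE1, hE2⟩
      set F : Finset (Fin k) := Finset.univ.filter (fun i => (i : ℕ) ∈ E) with hFdef
      set F' : Finset ℕ := F.image Fin.val with hF'def
      have hsF' : ∑ i ∈ F', x i = ∑ i ∈ F, x ↑i :=
        Finset.sum_image (fun a _ b _ h => Fin.val_injective h)
      have hF'sub : (↑F' : Set ℕ) ⊆ E := by
        intro j hj
        obtain ⟨i, hi, rfl⟩ := Finset.mem_image.1 hj
        exact (Finset.mem_filter.1 hi).2
      by_cases hFE : F ∈ ℰ
      · have hFv : v ≤ ∑ i ∈ F, x ↑i := (hcond F).1 hFE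
        have hmle : phi ↑F' x ≤ phi E x := phi_mono x h0 hF'sub
        rw [phi_finset, hsF'] at hmle
        linarith
      · have hFc : 1 - u ≤ ∑ i ∈ Fᶜ, x ↑i := (hcond F).2 hFE
        have hEsub : E ⊆ (↑F' : Set ℕ) ∪ Set.Ici k := by
          intro j hj
          by_cases hjk : j < k
          · left
            refine Finset.mem_coe.2 (Finset.mem_image.2 ⟨⟨j, hjk⟩, ?_, rfl⟩)
            exact Finset.mem_filter.2 ⟨Finset.mem_univ _, hj⟩
          · right
            exact Set.mem_Ici.2 (not_lt.1 hjk)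
        have hd : Disjoint (↑F' : Set ℕ) (Set.Ici k) := by
          rw [Set.disjoint_left]
          intro a ha ha'
          obtain ⟨i, _, rfl⟩ := Finset.mem_image.1 (Finset.mem_coe.1 ha)
          exact absurd (Set.mem_Ici.1 ha') (not_le.2 i.isLt)
        have hchain : phi E x ≤ ∑ i ∈ F, x ↑i + ∑' i, x (i + k) := by
          calc phi E x ≤ phi ((↑F' : Set ℕ) ∪ Set.Ici k) x := phi_mono x h0 hEsub
            _ = phi ↑F' x + phi (Set.Ici k) x := phi_union x hd
            _ = ∑ i ∈ F, x ↑i + ∑' i, x (i + k) := by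
                rw [phi_finset, hsF', phi_Ici]
        have hsc := Finset.sum_add_sum_compl F (fun i : Fin k => x ↑i)
        have huniv : ∑ i : Fin k, x ↑i = ∑ i ∈ Finset.range k, x i :=
          Fin.sum_univ_eq_sum_range (fun i => x i) k
        rw [huniv] at hsc
        have htot : ∑ i ∈ Finset.range k, x i + ∑' i, x (i + k) = 1 := by
          rw [Summable.sum_add_tsum_nat_add k hsum, htsum1]
        linarith
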